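/- Under the assumptions of the previous lemma (gradient Lipschitz condition with constant C_n on A, |Y_i| ≤ β_n, C_n·δ_n² ≤ 1, w* ∈ A with |f_{w*}(X_i)| ≤ β_n, A contained in the ball of radius δ_n around w^(0)), it holds for each t that |F_n(w*) − F_{n,lin,w^(t)}(w*)| ≤ 3·β_n·C_n·‖w* − w^(t)‖², where F_{n,lin,w₀}(w) = (1/n)·Σ_i |Y_i − f_{lin,w₀,w}(X_i)|² is the empirical risk of the linear Taylor approximation f_{lin,w₀,w}(x) = f_{w₀}(x) + ⟨∇_w f_{w₀}(x), w − w₀⟩. -/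

import Mathlib

open scoped RealInnerProductSpace

lemma taylor_quad_bound {E : Type*} [NormedAddCommGroup E] [InnerProductSpace ℝ E] [CompleteSpace E]
    (f : E → ℝ) (Gf : E → E) (hGf : ∀ w, HasGradientAt f (Gf w) w)
    (A : Set E) (hAconv : Convex ℝ A) (C : ℝ)
    (hLip : ∀ w₁ ∈ A, ∀ w₂ ∈ A, ‖Gf w₁ - Gf w₂‖ ≤ C * ‖w₁ - w₂‖)
    (w : E) (hw : w ∈ A) (wt : E) (hwt : wt ∈ A) :
    |f w - (f wt + ⟪Gf wt, w - wt⟫)| ≤ C / 2 * ‖w - wt‖ ^ 2 := by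
  set v := w - wt with hv
  set g : ℝ → ℝ := fun t => f (wt + t • v) - f wt - t * ⟪Gf wt, v⟫ with hg
  have hmem : ∀ t ∈ Set.Icc (0:ℝ) 1, wt + t • v ∈ A := by
    intro t ht
    have : wt + t • v = (1 - t) • wt + t • w := by
      rw [hv]; module
    rw [this]
    exact hAconv hwt hw (by linarith [ht.1, ht.2]) ht.1 (by ring)
  have hderiv : ∀ t : ℝ, HasDerivAt g (⟪Gf (wt + t • v) - Gf wt, v⟫) t := by
    intro t
    have hline : HasDerivAt (fun t : ℝ => wt + t • v) v t := by
      simpa using ((hasDerivAt_id t).smul_const v).const_add wt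
    have hcomp : HasDerivAt (fun t : ℝ => f (wt + t • v))
        ((InnerProductSpace.toDual ℝ E (Gf (wt + t • v))) v) t :=
      (hGf (wt + t • v)).hasFDerivAt.comp_hasDerivAt t hline
    rw [InnerProductSpace.toDual_apply_apply] at hcomp
    have := (hcomp.sub_const (f wt)).sub ((hasDerivAt_id t).mul_const ⟪Gf wt, v⟫)
    rw [inner_sub_left, ← one_mul ⟪Gf wt, v⟫]; exact this
  have key : ∀ x ∈ Set.Icc (0:ℝ) 1, ‖g x‖ ≤ C * ‖v‖ ^ 2 / 2 * x ^ 2 := by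
    intro x hx
    refine image_norm_le_of_norm_deriv_right_le_deriv_boundary
      (f' := fun t => ⟪Gf (wt + t • v) - Gf wt, v⟫)
      (B := fun t => C * ‖v‖ ^ 2 / 2 * t ^ 2)
      (B' := fun t => C * ‖v‖ ^ 2 * t) ?_ ?_ ?_ ?_ ?_ hx
    · exact fun t _ => (hderiv t).continuousAt.continuousWithinAt
    · exact fun t ht => (hderiv t).hasDerivWithinAt
    · simp [hg]
    · intro t
      have : HasDerivAt (fun t : ℝ => C * ‖v‖ ^ 2 / 2 * t ^ 2) (C * ‖v‖ ^ 2 / 2 * (2 * t)) t := by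
        simpa using (hasDerivAt_pow 2 t).const_mul (C * ‖v‖ ^ 2 / 2)
      convert this using 1; ring
    · intro t ht
      have hct : wt + t • v ∈ A := hmem t ⟨ht.1, ht.2.le⟩
      calc ‖⟪Gf (wt + t • v) - Gf wt, v⟫‖ ≤ ‖Gf (wt + t • v) - Gf wt‖ * ‖v‖ :=
            norm_inner_le_norm _ _
        _ ≤ C * ‖wt + t • v - wt‖ * ‖v‖ := by
            have := hLip _ hct _ hwt
            exact mul_le_mul_of_nonneg_right this (norm_nonneg _)
        _ = C * ‖v‖ ^ 2 * t := by
            rw [show wt + t • v - wt = t • v by abel, norm_smul,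
              Real.norm_eq_abs, abs_of_nonneg ht.1]
            ring
  have := key 1 ⟨zero_le_one, le_refl 1⟩
  simp only [hg, one_smul, one_pow, mul_one] at this
  rw [Real.norm_eq_abs] at this
  have hwv : wt + v = w := by rw [hv]; abel
  rw [hwv] at this
  calc |f w - (f wt + ⟪Gf wt, v⟫)| = |f w - f wt - 1 * ⟪Gf wt, v⟫| := by ring_nf
    _ ≤ C * ‖v‖ ^ 2 / 2 := this
    _ = C / 2 * ‖v‖ ^ 2 := by ring

/-- Bound on the difference between the empirical risk and the empirical risk of the
linear Taylor approximation, at a point `wstar` of the constraint set. -/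
theorem empirical_risk_linearization_error
    {J d n : ℕ} (hn : 0 < n)
    (f : EuclideanSpace ℝ (Fin J) → EuclideanSpace ℝ (Fin d) → ℝ)
    (Gf : EuclideanSpace ℝ (Fin J) → EuclideanSpace ℝ (Fin d) → EuclideanSpace ℝ (Fin J))
    (hGf : ∀ w x, HasGradientAt (fun v => f v x) (Gf w x) w)
    (X : Fin n → EuclideanSpace ℝ (Fin d)) (Y : Fin n → ℝ)
    (w0 : EuclideanSpace ℝ (Fin J)) (deltan : ℝ) (hdelta : 0 ≤ deltan)
    (A : Set (EuclideanSpace ℝ (Fin J)))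
    (hAsub : A ⊆ {w | ‖w - w0‖ ≤ deltan}) (hAc : IsClosed A) (hAconv : Convex ℝ A)
    (Cn betan : ℝ) (hCn : 0 ≤ Cn) (hbetan : 1 ≤ betan)
    (hLip : ∀ w₁ ∈ A, ∀ w₂ ∈ A, ∀ i : Fin n,
      ‖Gf w₁ (X i) - Gf w₂ (X i)‖ ≤ Cn * ‖w₁ - w₂‖)
    (hY : ∀ i : Fin n, |Y i| ≤ betan)
    (hCd : Cn * deltan ^ 2 ≤ 1)
    (wstar : EuclideanSpace ℝ (Fin J)) (hwstar : wstar ∈ A)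
    (hfwstar : ∀ i : Fin n, |f wstar (X i)| ≤ betan)
    (wt : EuclideanSpace ℝ (Fin J)) (hwt : wt ∈ A) :
    |(1 / (n : ℝ)) * ∑ i : Fin n, |Y i - f wstar (X i)| ^ 2
      - (1 / (n : ℝ)) * ∑ i : Fin n,
          |Y i - (f wt (X i) + (inner ℝ (Gf wt (X i)) (wstar - wt) : ℝ))| ^ 2|
      ≤ 3 * betan * Cn * ‖wstar - wt‖ ^ 2 := by
  have hbpos : (0:ℝ) < betan := lt_of_lt_of_le one_pos hbetan
  -- Taylor bound for each i
  have hTaylor : ∀ i : Fin n,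
      |f wstar (X i) - (f wt (X i) + ⟪Gf wt (X i), wstar - wt⟫)|
        ≤ Cn / 2 * ‖wstar - wt‖ ^ 2 := fun i =>
    taylor_quad_bound (fun w => f w (X i)) (fun w => Gf w (X i)) (fun w => hGf w (X i))
      A hAconv Cn (fun w₁ h1 w₂ h2 => hLip w₁ h1 w₂ h2 i) wstar hwstar wt hwt
  -- distance bound
  have hdist : ‖wstar - wt‖ ≤ 2 * deltan := by
    have h1 := hAsub hwstar
    have h2 := hAsub hwt
    calc ‖wstar - wt‖ = ‖(wstar - w0) - (wt - w0)‖ := by rw [show (wstar - w0) - (wt - w0) = wstar - wt by abel]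
      _ ≤ ‖wstar - w0‖ + ‖wt - w0‖ := norm_sub_le _ _
      _ ≤ deltan + deltan := add_le_add h1 h2
      _ = 2 * deltan := by ring
  have hsmall : Cn / 2 * ‖wstar - wt‖ ^ 2 ≤ 2 * betan := by
    have hsq : ‖wstar - wt‖ ^ 2 ≤ (2 * deltan) ^ 2 :=
      pow_le_pow_left₀ (norm_nonneg _) hdist 2
    nlinarith [norm_nonneg (wstar - wt)]
  -- per-term bound
  have hterm : ∀ i : Fin n,
      |(|Y i - f wstar (X i)| ^ 2 - |Y i - (f wt (X i) + ⟪Gf wt (X i), wstar - wt⟫)| ^ 2)|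
        ≤ 3 * betan * Cn * ‖wstar - wt‖ ^ 2 := by
    intro i
    set a := Y i - f wstar (X i) with ha
    set b := Y i - (f wt (X i) + ⟪Gf wt (X i), wstar - wt⟫) with hb
    have hab : |a - b| ≤ Cn / 2 * ‖wstar - wt‖ ^ 2 := by
      have : a - b = -(f wstar (X i) - (f wt (X i) + ⟪Gf wt (X i), wstar - wt⟫)) := by
        rw [ha, hb]; ring
      rw [this, abs_neg]; exact hTaylor i
    have haa : |a| ≤ 2 * betan := by
      calc |a| ≤ |Y i| + |f wstar (X i)| := abs_sub _ _
        _ ≤ betan + betan := add_le_add (hY i) (hfwstar i)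
        _ = 2 * betan := by ring
    have hbb : |b| ≤ 4 * betan := by
      calc |b| = |a - (a - b)| := by ring_nf
        _ ≤ |a| + |a - b| := abs_sub _ _
        _ ≤ 2 * betan + 2 * betan := add_le_add haa (hab.trans hsmall)
        _ = 4 * betan := by ring
    have hsum : |a + b| ≤ 6 * betan := by
      calc |a + b| ≤ |a| + |b| := abs_add_le _ _
        _ ≤ 2 * betan + 4 * betan := add_le_add haa hbb
        _ = 6 * betan := by ring
    calc |(|a| ^ 2 - |b| ^ 2)| = |a + b| * |a - b| := by
          rw [sq_abs, sq_abs, show a^2 - b^2 = (a+b)*(a-b) by ring, abs_mul]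
      _ ≤ 6 * betan * (Cn / 2 * ‖wstar - wt‖ ^ 2) := by
          apply mul_le_mul hsum hab (abs_nonneg _)
          positivity
      _ = 3 * betan * Cn * ‖wstar - wt‖ ^ 2 := by ring
  -- combine
  have hnpos : (0:ℝ) < n := Nat.cast_pos.mpr hn
  rw [← mul_sub, ← Finset.sum_sub_distrib, abs_mul, abs_of_pos (by positivity : (0:ℝ) < 1/(n:ℝ))]
  calc (1/(n:ℝ)) * |∑ i : Fin n, (|Y i - f wstar (X i)| ^ 2
        - |Y i - (f wt (X i) + ⟪Gf wt (X i), wstar - wt⟫)| ^ 2)|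
      ≤ (1/(n:ℝ)) * ∑ i : Fin n, 3 * betan * Cn * ‖wstar - wt‖ ^ 2 := by
        apply mul_le_mul_of_nonneg_left _ (by positivity)
        exact (Finset.abs_sum_le_sum_abs _ _).trans
          (Finset.sum_le_sum fun i _ => hterm i)
    _ = 3 * betan * Cn * ‖wstar - wt‖ ^ 2 := by
        rw [Finset.sum_const, Finset.card_univ, Fintype.card_fin, nsmul_eq_mul]
        field_simp
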